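/- Let K be a complex Hilbert space, A_1, …, A_n positive invertible bounded self-adjoint operators on K, μ_1, …, μ_n > 0, and y ∈ K. Define u_k = μ_k A_k^{-1} (Σ_j μ_j² A_j^{-1})^{-1} y. Then Σ_k μ_k u_k = y and Σ_k ⟨A_k u_k, u_k⟩ = ⟨(Σ_j μ_j² A_j^{-1})^{-1} y, y⟩. -/

import Mathlib

/-- The minimizer u_k = μ_k A_k⁻¹ (Σ μ_j² A_j⁻¹)⁻¹ y satisfies the constraint and
attains the minimum value. -/
theorem stmt2 {K : Type*} [NormedAddCommGroup K] [InnerProductSpace ℂ K] [CompleteSpace K]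
    (n : ℕ) (A Ainv : Fin n → K →L[ℂ] K) (μ : Fin n → ℝ) (y : K)
    (hA : ∀ k, (A k).IsPositive)
    (hAinv : ∀ k, (A k) ∘L (Ainv k) = 1 ∧ (Ainv k) ∘L (A k) = 1)
    (hAc : ∀ k, ∃ c : ℝ, 0 < c ∧ ∀ x : K, c * ‖x‖ ^ 2 ≤ ((inner ℂ ((A k) x) x : ℂ)).re)
    (hμ : ∀ k, 0 < μ k)
    (Tinv : K →L[ℂ] K)
    (hTinv : (∑ j, ((μ j : ℂ) ^ 2) • Ainv j) ∘L Tinv = 1 ∧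
             Tinv ∘L (∑ j, ((μ j : ℂ) ^ 2) • Ainv j) = 1)
    (u : Fin n → K) (hu : ∀ k, u k = (μ k : ℂ) • (Ainv k) (Tinv y)) :
    (∑ k, (μ k : ℂ) • u k = y) ∧
      ∑ k, ((inner ℂ ((A k) (u k)) (u k) : ℂ)).re = ((inner ℂ (Tinv y) y : ℂ)).re := by
  set x := Tinv y with hx
  have h1 : (∑ j, ((μ j : ℂ) ^ 2) • Ainv j) x = y := by
    have := congrArg (fun f : K →L[ℂ] K => f y) hTinv.1
    simpa using this
  have hsum : ∑ k, (μ k : ℂ) • u k = y := by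
    calc ∑ k, (μ k : ℂ) • u k = ∑ k, (((μ k : ℂ) ^ 2) • Ainv k) x := by
          refine Finset.sum_congr rfl fun k _ => ?_
          rw [hu k, smul_smul, ← sq]
          rfl
      _ = (∑ j, ((μ j : ℂ) ^ 2) • Ainv j) x := by
          rw [ContinuousLinearMap.sum_apply]
      _ = y := h1
  refine ⟨hsum, ?_⟩
  have hAI : ∀ k (v : K), (A k) ((Ainv k) v) = v := by
    intro k v
    have := congrArg (fun f : K →L[ℂ] K => f v) (hAinv k).1
    simpa using this
  have hterm : ∀ k, (inner ℂ ((A k) (u k)) (u k) : ℂ)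
      = inner ℂ x ((((μ k : ℂ) ^ 2) • Ainv k) x) := by
    intro k
    rw [hu k]
    simp only [map_smul, hAI, inner_smul_left, inner_smul_right,
      ContinuousLinearMap.smul_apply]
    rw [Complex.conj_ofReal]
    ring
  have hsum2 : (∑ k, (inner ℂ ((A k) (u k)) (u k) : ℂ)) = inner ℂ x y := by
    calc (∑ k, (inner ℂ ((A k) (u k)) (u k) : ℂ))
        = ∑ k, (inner ℂ x ((((μ k : ℂ) ^ 2) • Ainv k) x) : ℂ) :=
          Finset.sum_congr rfl fun k _ => hterm k
      _ = inner ℂ x (∑ k, (((μ k : ℂ) ^ 2) • Ainv k) x) := (inner_sum _ _ _).symm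
      _ = inner ℂ x ((∑ j, ((μ j : ℂ) ^ 2) • Ainv j) x) := by
          rw [ContinuousLinearMap.sum_apply]
      _ = inner ℂ x y := by rw [h1]
  calc ∑ k, ((inner ℂ ((A k) (u k)) (u k) : ℂ)).re
      = (∑ k, (inner ℂ ((A k) (u k)) (u k) : ℂ)).re := (Complex.re_sum _ _).symm
    _ = ((inner ℂ x y : ℂ)).re := by rw [hsum2]
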